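/- Let M, a, s be positive integers with M > 1 such that ∑_{i=0}^{M-1} (a+i)^2 = s^2, and suppose M = 24·m₁ + 9 for a nonnegative integer m₁. Then for every prime p > 3 with p ≢ 1 (mod 12) and p ≢ 11 (mod 12), there do not exist integers i ≥ 0 and q ≥ 1 with p ∤ q such that 24·m₁ + 9 = p^(2i+1)·q; equivalently, the exact power of p dividing M is even. -/

import Mathlib

lemma key_sum (a : ℕ) : ∀ M : ℕ,
    12 * (∑ i ∈ Finset.range (M + 1), (a + i) ^ 2) + (M + 1)
      = (M + 1) * (3 * (2 * a + M) ^ 2 + (M + 1) ^ 2) := by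
  intro M
  induction M with
  | zero => simp [Finset.sum_range_one]; ring
  | succ n ih =>
    rw [Finset.sum_range_succ]
    zify at ih ⊢
    linear_combination ih

lemma three_not_square (p : ℕ) (hp : p.Prime) (hp3 : 3 < p)
    (h1 : p % 12 ≠ 1) (h11 : p % 12 ≠ 11) : ¬ IsSquare (3 : ZMod p) := by
  haveI : Fact p.Prime := ⟨hp⟩
  have h2 : p % 2 = 1 := Nat.odd_iff.mp (hp.odd_of_ne_two (by omega))
  have h3 : p % 3 ≠ 0 := by
    intro h
    have : (3 : ℕ) ∣ p := Nat.dvd_of_mod_eq_zero h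
    rcases (Nat.Prime.eq_one_or_self_of_dvd hp 3 this) with h' | h' <;> omega
  have hcast : ((3 : ℕ) : ZMod p) = (3 : ZMod p) := by push_cast; ring
  rcases (by omega : p % 12 = 5 ∨ p % 12 = 7) with h | h
  · have hp4 : p % 4 = 1 := by omega
    have hiff := ZMod.exists_sq_eq_prime_iff_of_mod_four_eq_one (p := p) (q := 3) hp4
      (by norm_num)
    rw [hcast] at hiff
    intro hsq
    have : IsSquare ((p : ℕ) : ZMod 3) := hiff.mp hsq
    rw [← ZMod.natCast_mod, (by omega : p % 3 = 2)] at this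
    revert this; decide
  · have hp4 : p % 4 = 3 := by omega
    have hiff := ZMod.exists_sq_eq_prime_iff_of_mod_four_eq_three (p := p) (q := 3) hp4
      (by norm_num) (by omega)
    rw [hcast] at hiff
    intro hsq
    have : ¬ IsSquare ((p : ℕ) : ZMod 3) := hiff.mp hsq
    rw [← ZMod.natCast_mod, (by omega : p % 3 = 1)] at this
    exact this (by decide)

theorem stmt (M a s m₁ : ℕ) (hM : 1 < M) (ha : 1 ≤ a) (hs : 1 ≤ s)
    (hsum : ∑ i ∈ Finset.range M, (a + i) ^ 2 = s ^ 2)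
    (hMeq : M = 24 * m₁ + 9) :
    ∀ p : ℕ, p.Prime → 3 < p → p % 12 ≠ 1 → p % 12 ≠ 11 →
      ¬ ∃ i q : ℕ, 1 ≤ q ∧ ¬ p ∣ q ∧ 24 * m₁ + 9 = p ^ (2 * i + 1) * q := by
  intro p hp hp3 h1 h11 ⟨i, q, hq1, hpq, hMq⟩
  haveI : Fact p.Prime := ⟨hp⟩
  rw [← hMeq] at hMq
  -- the key identity
  set c := 2 * a + (M - 1) with hc
  have hkey : 12 * s ^ 2 + M = M * (3 * c ^ 2 + M ^ 2) := by
    have := key_sum a (M - 1)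
    rw [(by omega : M - 1 + 1 = M), hsum] at this
    exact this
  set t := 3 * c ^ 2 + M ^ 2 - 1 with ht
  have hM2 : 81 ≤ M ^ 2 := by nlinarith
  have ht1 : t + 1 = 3 * c ^ 2 + M ^ 2 := by omega
  have hst : 12 * s ^ 2 = M * t := by
    have : M * (t + 1) = M * t + M := by ring
    rw [ht1] at this
    omega
  have htne : t ≠ 0 := by omega
  have hsne : s ≠ 0 := by omega
  -- p does not divide 12
  have hp12 : ¬ p ∣ 12 := by
    intro hd
    have := Nat.le_of_dvd (by norm_num) hd
    interval_cases p <;> revert hp hd <;> decide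
  -- p divides t
  have hpt : p ∣ t := by
    by_contra hnd
    have hL : padicValNat p (12 * s ^ 2) = 2 * padicValNat p s := by
      rw [padicValNat.mul (by norm_num) (pow_ne_zero 2 hsne),
        padicValNat.eq_zero_of_not_dvd hp12, padicValNat.pow s 2]
      ring
    have hR : padicValNat p (M * t) = 2 * i + 1 := by
      rw [hMq, mul_assoc, padicValNat.mul (pow_ne_zero _ hp.pos.ne')
        (by positivity), padicValNat.prime_pow,
        padicValNat.mul (by omega) htne,
        padicValNat.eq_zero_of_not_dvd hpq, padicValNat.eq_zero_of_not_dvd hnd]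
    rw [hst, hR] at hL
    omega
  have hpM : p ∣ M := hMq ▸ Dvd.dvd.mul_right (dvd_pow_self p (by omega)) q
  -- pass to ZMod p
  have hz : (3 : ZMod p) * (c : ZMod p) ^ 2 = 1 := by
    have h0 : ((t : ℕ) : ZMod p) = 0 := (ZMod.natCast_eq_zero_iff t p).mpr hpt
    have hM0 : ((M : ℕ) : ZMod p) = 0 := (ZMod.natCast_eq_zero_iff M p).mpr hpM
    have := congrArg (Nat.cast : ℕ → ZMod p) ht1
    push_cast at this
    rw [h0, hM0] at this
    linear_combination -this
  have hsq : IsSquare (3 : ZMod p) := by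
    refine ⟨3 * (c : ZMod p), ?_⟩
    linear_combination (-3 : ZMod p) * hz
  exact three_not_square p hp hp3 h1 h11 hsq
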